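/- Newman's rational function r(x) = x(p(x)−p(−x))/(p(x)+p(−x)), where p(x) = Π_{k=0}^{N−1}(x+ξ^k) with ξ = e^{−1/√N}, satisfies ‖|x| − r(x)‖_{∞,[−1,1]} ≤ 3 e^{−√N} for all N ≥ 4. -/

import Mathlib

open Finset

/-- The basic factor inequality: `1 - t ≤ exp (-(2t)) * (1 + t)` for `t ≥ 0`. -/
lemma newman_L1 {t : ℝ} (ht : 0 ≤ t) : 1 - t ≤ Real.exp (-(2 * t)) * (1 + t) := by
  set f : ℝ → ℝ := fun u => Real.exp (-(2 * u)) * (1 + u) + u with hf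
  have hderiv : ∀ s : ℝ, HasDerivAt f (1 - Real.exp (-(2 * s)) * (1 + 2 * s)) s := by
    intro s
    have h1 : HasDerivAt (fun u : ℝ => -(2 * u)) (-2) s := by
      exact (by simpa using ((hasDerivAt_id s).const_mul (2 : ℝ)).neg : HasDerivAt (-fun y : ℝ => 2 * y) (-2) s)
    have h2 : HasDerivAt (fun u : ℝ => Real.exp (-(2 * u))) (Real.exp (-(2 * s)) * (-2)) s :=
      (Real.hasDerivAt_exp _).comp s h1
    have h3 : HasDerivAt (fun u : ℝ => 1 + u) 1 s := by
      simpa using (hasDerivAt_id s).const_add (1 : ℝ)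
    have h4 := (h2.mul h3).add (hasDerivAt_id s)
    refine h4.congr_deriv ?_
    ring
  have hmono : Monotone f := by
    apply monotone_of_deriv_nonneg
    · intro s; exact (hderiv s).differentiableAt
    · intro s
      rw [(hderiv s).deriv]
      have h5 : Real.exp (-(2 * s)) * (1 + 2 * s) ≤ Real.exp (-(2 * s)) * Real.exp (2 * s) := by
        apply mul_le_mul_of_nonneg_left _ (Real.exp_pos _).le
        linarith [Real.add_one_le_exp (2 * s)]
      rw [← Real.exp_add] at h5
      simp at h5
      linarith
  have h0 : f 0 ≤ f t := hmono ht
  simp only [f, mul_zero, neg_zero, Real.exp_zero, one_mul, add_zero, mul_one] at h0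
  linarith

/-- Scaled factor inequality: if `0 ≤ b ≤ a`, `0 ≤ c`, `c*a ≤ b` then
`a - b ≤ exp (-(2c)) * (a + b)`. -/
lemma newman_fac {a b c : ℝ} (ha : 0 < a) (hb : 0 ≤ b) (hba : b ≤ a)
    (hc : 0 ≤ c) (hcb : c * a ≤ b) :
    a - b ≤ Real.exp (-(2 * c)) * (a + b) := by
  have ha' : a ≠ 0 := ha.ne'
  have ht : (0 : ℝ) ≤ b / a := div_nonneg hb ha.le
  have h1 := newman_L1 ht
  have h2 : Real.exp (-(2 * (b / a))) ≤ Real.exp (-(2 * c)) := by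
    apply Real.exp_le_exp.2
    have hcb' : c ≤ b / a := (le_div_iff₀ ha).2 hcb
    linarith
  have h3 : 1 - b / a ≤ Real.exp (-(2 * c)) * (1 + b / a) :=
    h1.trans (mul_le_mul_of_nonneg_right h2 (by positivity))
  have h6 := mul_le_mul_of_nonneg_left h3 ha.le
  have h4 : a * (1 - b / a) = a - b := by field_simp
  have h5 : a * (Real.exp (-(2 * c)) * (1 + b / a)) = Real.exp (-(2 * c)) * (a + b) := by
    first
    | (field_simp; ring)
    | field_simp
  rw [h4, h5] at h6
  exact h6

/-- Geometric sum lower bound. -/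
lemma newman_geom (N : ℕ) (hN : 4 ≤ N) (M : ℕ) :
    Real.sqrt N * (Real.exp (-(1 / Real.sqrt N)) * (1 - Real.exp (-(1 / Real.sqrt N)) ^ M))
      ≤ ∑ j ∈ Finset.range M, Real.exp (-(1 / Real.sqrt N)) ^ (j + 1) := by
  set q : ℝ := Real.exp (-(1 / Real.sqrt N)) with hqdef
  have hN0 : (0 : ℝ) < N := by exact_mod_cast Nat.lt_of_lt_of_le (by norm_num) hN
  have hsN : 0 < Real.sqrt N := Real.sqrt_pos.2 hN0
  have hq0 : 0 < q := Real.exp_pos _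
  have hq1 : q < 1 := by
    rw [hqdef, Real.exp_lt_one_iff, neg_lt_zero]
    exact div_pos one_pos hsN
  have hG0 : (0 : ℝ) ≤ ∑ i ∈ Finset.range M, q ^ i :=
    Finset.sum_nonneg fun i _ => pow_nonneg hq0.le i
  have hgeom : (∑ i ∈ Finset.range M, q ^ i) * (1 - q) = 1 - q ^ M := by
    have := geom_sum_mul q M
    linarith [this]
  have h1q : Real.sqrt N * (1 - q) ≤ 1 := by
    have h2 : 1 - 1 / Real.sqrt N ≤ q := by
      have := Real.add_one_le_exp (-(1 / Real.sqrt N))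
      linarith
    have h3 : Real.sqrt N * (1 / Real.sqrt N) = 1 := by field_simp
    nlinarith
  have key : Real.sqrt N * (1 - q ^ M) ≤ ∑ i ∈ Finset.range M, q ^ i := by
    calc Real.sqrt N * (1 - q ^ M)
        = (∑ i ∈ Finset.range M, q ^ i) * (Real.sqrt N * (1 - q)) := by
          rw [show (∑ i ∈ Finset.range M, q ^ i) * (Real.sqrt N * (1 - q))
              = Real.sqrt N * ((∑ i ∈ Finset.range M, q ^ i) * (1 - q)) by ring, hgeom]
      _ ≤ (∑ i ∈ Finset.range M, q ^ i) * 1 := mul_le_mul_of_nonneg_left h1q hG0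
      _ = ∑ i ∈ Finset.range M, q ^ i := mul_one _
  have hsum : ∑ j ∈ Finset.range M, q ^ (j + 1) = q * ∑ i ∈ Finset.range M, q ^ i := by
    rw [Finset.mul_sum]
    exact Finset.sum_congr rfl fun i _ => by ring
  rw [hsum]
  calc Real.sqrt N * (q * (1 - q ^ M)) = q * (Real.sqrt N * (1 - q ^ M)) := by ring
    _ ≤ q * ∑ i ∈ Finset.range M, q ^ i := mul_le_mul_of_nonneg_left key hq0.le

/-- Numeric fact: `1 ≤ 2 e^{-1/2}(1 - e^{-2})`. -/
lemma newman_num : (1 : ℝ) ≤ 2 * Real.exp (-(1 / 2 : ℝ)) * (1 - Real.exp (-(2 : ℝ))) := by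
  have e1 := Real.exp_one_gt_d9
  have e2 := Real.exp_one_lt_d9
  have ha : Real.exp (-(1 / 2 : ℝ)) ^ 2 * Real.exp 1 = 1 := by
    rw [← Real.exp_nat_mul, ← Real.exp_add]
    norm_num
  have hb : Real.exp (-(2 : ℝ)) * Real.exp 1 ^ 2 = 1 := by
    rw [← Real.exp_nat_mul, ← Real.exp_add]
    norm_num
  have hap : 0 < Real.exp (-(1 / 2 : ℝ)) := Real.exp_pos _
  have hbp : 0 < Real.exp (-(2 : ℝ)) := Real.exp_pos _
  have hep : 0 < Real.exp 1 := Real.exp_pos _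
  have ha2 : Real.exp (-(1 / 2 : ℝ)) ≥ 7 / 12 := by
    nlinarith [mul_pos hap hap, sq_nonneg (Real.exp (-(1 / 2 : ℝ)) - 7 / 12)]
  have hb2 : Real.exp (-(2 : ℝ)) ≤ 1 / 7 := by
    nlinarith
  nlinarith [mul_nonneg (sub_nonneg.2 ha2) (sub_nonneg.2 hb2)]

/-- The key product bound: for `ξ^N ≤ x ≤ 1`,
`∏ |ξ^k - x| ≤ e^{-√N} ∏ (ξ^k + x)`. -/
lemma newman_key (N : ℕ) (hN : 4 ≤ N) (x : ℝ) (hx1 : x ≤ 1)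
    (hx2 : Real.exp (-(1 / Real.sqrt N)) ^ N ≤ x) :
    ∏ k ∈ Finset.range N, |Real.exp (-(1 / Real.sqrt N)) ^ k - x|
      ≤ Real.exp (-Real.sqrt N) * ∏ k ∈ Finset.range N, (Real.exp (-(1 / Real.sqrt N)) ^ k + x) := by
  classical
  set q : ℝ := Real.exp (-(1 / Real.sqrt N)) with hqdef
  have hN0 : (0 : ℝ) < N := by exact_mod_cast Nat.lt_of_lt_of_le (by norm_num) hN
  have hsN : 0 < Real.sqrt N := Real.sqrt_pos.2 hN0
  have hsN2 : (2 : ℝ) ≤ Real.sqrt N := by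
    have h4 : Real.sqrt 4 ≤ Real.sqrt N := Real.sqrt_le_sqrt (by exact_mod_cast hN)
    have : Real.sqrt 4 = 2 := by
      rw [show (4 : ℝ) = 2 ^ 2 by norm_num, Real.sqrt_sq (by norm_num)]
    linarith
  have hq0 : 0 < q := Real.exp_pos _
  have hq1 : q < 1 := by
    rw [hqdef, Real.exp_lt_one_iff, neg_lt_zero]
    exact div_pos one_pos hsN
  have hqN : q ^ N = Real.exp (-Real.sqrt N) := by
    rw [hqdef, ← Real.exp_nat_mul]
    congr 1
    field_simp
    rw [Real.sq_sqrt hN0.le]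
  have hx0 : 0 < x := lt_of_lt_of_le (pow_pos hq0 N) hx2
  set P : ℕ → Prop := fun k => x ≤ q ^ k with hP
  set m := Nat.findGreatest P (N - 1) with hm
  have hm_le : m ≤ N - 1 := Nat.findGreatest_le _
  have hxm : x ≤ q ^ m := by
    have h0 : P 0 := by simpa [P] using hx1
    exact Nat.findGreatest_spec (Nat.zero_le _) h0
  have hxm1 : q ^ (m + 1) ≤ x := by
    rcases eq_or_lt_of_le hm_le with h | h
    · rw [h, show N - 1 + 1 = N by omega]
      exact hx2
    · have hgr := Nat.findGreatest_is_greatest (Nat.lt_succ_self m) (by omega : m + 1 ≤ N - 1)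
      simp only [P, not_le] at hgr
      exact hgr.le
  -- per-factor exponents
  set c : ℕ → ℝ := fun k => if k ≤ m then q ^ (m + 1 - k) else q ^ (k - m) with hc
  have hc0 : ∀ k, 0 ≤ c k := by
    intro k; simp only [c]; split <;> positivity
  have hfac : ∀ k ∈ Finset.range N, |q ^ k - x| ≤ Real.exp (-(2 * c k)) * (q ^ k + x) := by
    intro k _
    rcases le_or_gt k m with hkm | hkm
    · have h1 : x ≤ q ^ k :=
        le_trans hxm (pow_le_pow_of_le_one hq0.le hq1.le hkm)
      have h2 : q ^ (m + 1 - k) * q ^ k = q ^ (m + 1) := by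
        rw [← pow_add]; congr 1; omega
      rw [abs_of_nonneg (by linarith)]
      simp only [c, if_pos hkm]
      exact newman_fac (pow_pos hq0 k) hx0.le h1 (by positivity) (by rw [h2]; exact hxm1)
    · have h1 : q ^ k ≤ x :=
        le_trans (pow_le_pow_of_le_one hq0.le hq1.le (by omega : m + 1 ≤ k)) hxm1
      rw [abs_of_nonpos (by linarith), neg_sub]
      simp only [c, if_neg (not_le.2 hkm)]
      have h2 : q ^ (k - m) * q ^ m = q ^ k := by
        rw [← pow_add]; congr 1; omega
      have h3 : q ^ (k - m) * x ≤ q ^ k := by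
        calc q ^ (k - m) * x ≤ q ^ (k - m) * q ^ m :=
              mul_le_mul_of_nonneg_left hxm (by positivity)
          _ = q ^ k := h2
      have h4 := newman_fac hx0 (pow_nonneg hq0.le k) h1 (by positivity) h3
      linarith [h4]
  have hprodpos : (0 : ℝ) ≤ ∏ k ∈ Finset.range N, (q ^ k + x) :=
    Finset.prod_nonneg fun k _ => by positivity
  have hprod : ∏ k ∈ Finset.range N, |q ^ k - x|
      ≤ ∏ k ∈ Finset.range N, (Real.exp (-(2 * c k)) * (q ^ k + x)) :=
    Finset.prod_le_prod (fun k _ => abs_nonneg _) hfac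
  rw [Finset.prod_mul_distrib, ← Real.exp_sum] at hprod
  -- bound the exponent sum
  have hmN : m + 1 ≤ N := by omega
  have hsplit : ∑ k ∈ Finset.range N, c k
      = (∑ j ∈ Finset.range (m + 1), q ^ (j + 1))
        + ∑ j ∈ Finset.range (N - (m + 1)), q ^ (j + 1) := by
    rw [← Finset.sum_range_add_sum_Ico c hmN]
    congr 1
    · calc ∑ k ∈ Finset.range (m + 1), c k
          = ∑ j ∈ Finset.range (m + 1), c (m + 1 - 1 - j) :=
            (Finset.sum_range_reflect c (m + 1)).symm
        _ = ∑ j ∈ Finset.range (m + 1), q ^ (j + 1) := by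
            apply Finset.sum_congr rfl
            intro j hj
            have hj' : j < m + 1 := Finset.mem_range.1 hj
            simp only [c]
            rw [if_pos (by omega)]
            congr 1
            omega
    · rw [Finset.sum_Ico_eq_sum_range]
      apply Finset.sum_congr rfl
      intro j _
      simp only [c]
      rw [if_neg (by omega)]
      congr 1
      omega
  have hg1 := newman_geom N hN (m + 1)
  have hg2 := newman_geom N hN (N - (m + 1))
  have hab : q ^ (m + 1) * q ^ (N - (m + 1)) = q ^ N := by
    rw [← pow_add]; congr 1; omega
  have ha1 : q ^ (m + 1) ≤ 1 := pow_le_one₀ hq0.le hq1.le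
  have hb1 : q ^ (N - (m + 1)) ≤ 1 := pow_le_one₀ hq0.le hq1.le
  have habN : q ^ (m + 1) + q ^ (N - (m + 1)) ≤ 1 + q ^ N := by
    nlinarith [mul_nonneg (sub_nonneg.2 ha1) (sub_nonneg.2 hb1)]
  have hqhalf : Real.exp (-(1 / 2 : ℝ)) ≤ q := by
    rw [hqdef]
    apply Real.exp_le_exp.2
    rw [neg_le_neg_iff]
    rw [div_le_div_iff₀ hsN (by norm_num)]
    linarith
  have hqNe : q ^ N ≤ Real.exp (-(2 : ℝ)) := by
    rw [hqN]
    apply Real.exp_le_exp.2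
    linarith
  have hnum := newman_num
  have h2q : 1 ≤ 2 * q * (1 - q ^ N) := by
    have hqN1 : q ^ N < 1 := by
      rw [hqN, ← Real.exp_zero]; exact Real.exp_lt_exp.2 (by linarith)
    nlinarith [Real.exp_pos (-(1 / 2 : ℝ)), Real.exp_pos (-(2 : ℝ))]
  have hSsum : Real.sqrt N ≤ 2 * ∑ k ∈ Finset.range N, c k := by
    rw [hsplit]
    have hchain : Real.sqrt N * (q * ((1 - q ^ (m + 1)) + (1 - q ^ (N - (m + 1)))))
        ≤ (∑ j ∈ Finset.range (m + 1), q ^ (j + 1))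
          + ∑ j ∈ Finset.range (N - (m + 1)), q ^ (j + 1) := by
      have := add_le_add hg1 hg2
      calc Real.sqrt N * (q * ((1 - q ^ (m + 1)) + (1 - q ^ (N - (m + 1)))))
          = Real.sqrt N * (q * (1 - q ^ (m + 1)))
            + Real.sqrt N * (q * (1 - q ^ (N - (m + 1)))) := by ring
        _ ≤ _ := this
    have hfin : Real.sqrt N
        ≤ 2 * (Real.sqrt N * (q * ((1 - q ^ (m + 1)) + (1 - q ^ (N - (m + 1)))))) := by
      have h5 : 1 - q ^ N ≤ (1 - q ^ (m + 1)) + (1 - q ^ (N - (m + 1))) := by linarith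
      nlinarith [hsN, hq0, h2q, mul_le_mul_of_nonneg_left h5 hq0.le]
    linarith
  calc ∏ k ∈ Finset.range N, |q ^ k - x|
      ≤ Real.exp (∑ k ∈ Finset.range N, -(2 * c k)) * ∏ k ∈ Finset.range N, (q ^ k + x) :=
        hprod
    _ ≤ Real.exp (-Real.sqrt N) * ∏ k ∈ Finset.range N, (q ^ k + x) := by
        apply mul_le_mul_of_nonneg_right _ hprodpos
        apply Real.exp_le_exp.2
        rw [Finset.sum_neg_distrib, ← Finset.mul_sum]
        linarith
        
/-- Main estimate on `[0,1]`. -/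
lemma newman_main (N : ℕ) (hN : 4 ≤ N) (x : ℝ) (hx0 : 0 ≤ x) (hx1 : x ≤ 1) :
    |(|x| - x * ((∏ k ∈ Finset.range N, (x + Real.exp (-(1 / Real.sqrt N)) ^ k)) -
          (∏ k ∈ Finset.range N, (-x + Real.exp (-(1 / Real.sqrt N)) ^ k))) /
        ((∏ k ∈ Finset.range N, (x + Real.exp (-(1 / Real.sqrt N)) ^ k)) +
          (∏ k ∈ Finset.range N, (-x + Real.exp (-(1 / Real.sqrt N)) ^ k))))|
      ≤ 3 * Real.exp (-Real.sqrt N) := by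
  set q : ℝ := Real.exp (-(1 / Real.sqrt N)) with hqdef
  have hN0 : (0 : ℝ) < N := by exact_mod_cast Nat.lt_of_lt_of_le (by norm_num) hN
  have hsN : 0 < Real.sqrt N := Real.sqrt_pos.2 hN0
  have hsN2 : (2 : ℝ) ≤ Real.sqrt N := by
    have h4 : Real.sqrt 4 ≤ Real.sqrt N := Real.sqrt_le_sqrt (by exact_mod_cast hN)
    have : Real.sqrt 4 = 2 := by
      rw [show (4 : ℝ) = 2 ^ 2 by norm_num, Real.sqrt_sq (by norm_num)]
    linarith
  have hq0 : 0 < q := Real.exp_pos _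
  have hq1 : q < 1 := by
    rw [hqdef, Real.exp_lt_one_iff, neg_lt_zero]
    exact div_pos one_pos hsN
  have hqN : q ^ N = Real.exp (-Real.sqrt N) := by
    rw [hqdef, ← Real.exp_nat_mul]
    congr 1
    field_simp
    rw [Real.sq_sqrt hN0.le]
  set A : ℝ := ∏ k ∈ Finset.range N, (x + q ^ k) with hA
  set B : ℝ := ∏ k ∈ Finset.range N, (-x + q ^ k) with hB
  have hApos : 0 < A := Finset.prod_pos fun k _ => by positivity
  have habs : |x| = x := abs_of_nonneg hx0
  rcases le_or_gt x (q ^ N) with hcase | hcase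
  · -- small x
    have hB0 : 0 ≤ B := by
      apply Finset.prod_nonneg
      intro k hk
      have hk' : k < N := Finset.mem_range.1 hk
      have : q ^ N ≤ q ^ k := pow_le_pow_of_le_one hq0.le hq1.le hk'.le
      linarith
    have hBA : B ≤ A := by
      apply Finset.prod_le_prod
      · intro k hk
        have hk' : k < N := Finset.mem_range.1 hk
        have : q ^ N ≤ q ^ k := pow_le_pow_of_le_one hq0.le hq1.le hk'.le
        linarith
      · intro k _; linarith
    have hD : 0 < A + B := by linarith
    have hE : |x| - x * (A - B) / (A + B) = 2 * x * B / (A + B) := by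
      rw [habs]
      field_simp
      ring
    rw [hE, abs_of_nonneg (by positivity)]
    have h1 : 2 * x * B / (A + B) ≤ x := by
      rw [div_le_iff₀ hD]
      nlinarith
    have h2 : x ≤ Real.exp (-Real.sqrt N) := by rw [← hqN]; exact hcase
    have h3 : 0 < Real.exp (-Real.sqrt N) := Real.exp_pos _
    linarith
  · -- large x
    have hx0' : 0 < x := lt_trans (pow_pos hq0 N) hcase
    have hBabs : |B| ≤ q ^ N * A := by
      have h1 : |B| = ∏ k ∈ Finset.range N, |q ^ k - x| := by
        rw [hB, Finset.abs_prod]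
        apply Finset.prod_congr rfl
        intro k _
        rw [show -x + q ^ k = -(x - q ^ k) by ring, abs_neg, abs_sub_comm]
      have h2 := newman_key N hN x hx1 hcase.le
      rw [← hqdef] at h2
      have h3 : ∏ k ∈ Finset.range N, (q ^ k + x) = A := by
        rw [hA]; apply Finset.prod_congr rfl; intro k _; ring
      rw [h1, hqN]
      rw [h3] at h2
      exact h2
    have hqN1 : q ^ N < 1 := pow_lt_one₀ hq0.le hq1 (by omega)
    have hqN3 : q ^ N ≤ 1 / 3 := by
      rw [hqN]
      have h1 : Real.exp (-Real.sqrt N) ≤ Real.exp (-(2 : ℝ)) :=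
        Real.exp_le_exp.2 (by linarith)
      have e1 := Real.exp_one_gt_d9
      have hb : Real.exp (-(2 : ℝ)) = 1 / Real.exp 1 ^ 2 := by
        rw [Real.exp_neg]
        rw [show (2 : ℝ) = (2 : ℕ) * 1 by norm_num, Real.exp_nat_mul]
        norm_num
      have hep : 0 < Real.exp 1 := Real.exp_pos _
      have : Real.exp (-(2 : ℝ)) ≤ 1 / 3 := by
        rw [hb, div_le_div_iff₀ (by positivity) (by norm_num)]
        nlinarith
      linarith
    have hD : 0 < A + B := by
      have : -|B| ≤ B := neg_abs_le B
      nlinarith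
    have hE : |x| - x * (A - B) / (A + B) = 2 * x * B / (A + B) := by
      rw [habs]
      field_simp
      ring
    rw [hE, abs_div, abs_of_pos hD]
    rw [div_le_iff₀ hD]
    have h4 : |2 * x * B| = 2 * x * |B| := by
      rw [abs_mul, abs_of_nonneg (by positivity : (0:ℝ) ≤ 2 * x)]
    rw [h4]
    have h5 : 2 * x * |B| ≤ 2 * (q ^ N * A) := by
      have := mul_le_mul_of_nonneg_left hBabs (by norm_num : (0:ℝ) ≤ 2)
      nlinarith [abs_nonneg B]
    have h6 : 2 * (q ^ N * A) ≤ 3 * (q ^ N) * (A + B) := by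
      have hb3 : -|B| ≤ B := neg_abs_le B
      have hp : (0:ℝ) ≤ q ^ N := (pow_pos hq0 N).le
      have h7 : q ^ N * |B| ≤ q ^ N * (q ^ N * A) := mul_le_mul_of_nonneg_left hBabs hp
      have h8 : q ^ N * -|B| ≤ q ^ N * B := mul_le_mul_of_nonneg_left hb3 hp
      have h9 : (0:ℝ) ≤ (q ^ N * A) * (1 - 3 * q ^ N) :=
        mul_nonneg (mul_nonneg hp hApos.le) (by linarith)
      nlinarith [h7, h8, h9]
    rw [← hqN]
    linarith

/-- Newman's upper bound: ‖|x| - r(x)‖_{∞,[-1,1]} ≤ 3 e^{-√N} for N ≥ 4. -/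
theorem newman_upper_bound (N : ℕ) (hN : 4 ≤ N) :
    ∀ x ∈ Set.Icc (-1 : ℝ) 1,
      |(|x| - x * ((∏ k ∈ Finset.range N, (x + Real.exp (-(1 / Real.sqrt N)) ^ k)) -
            (∏ k ∈ Finset.range N, (-x + Real.exp (-(1 / Real.sqrt N)) ^ k))) /
          ((∏ k ∈ Finset.range N, (x + Real.exp (-(1 / Real.sqrt N)) ^ k)) +
            (∏ k ∈ Finset.range N, (-x + Real.exp (-(1 / Real.sqrt N)) ^ k))))|
        ≤ 3 * Real.exp (-Real.sqrt N) := by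
  intro x hx
  obtain ⟨hx1, hx2⟩ := hx
  rcases le_or_gt 0 x with hx0 | hx0
  · exact newman_main N hN x hx0 hx2
  · have h := newman_main N hN (-x) (by linarith) (by linarith)
    simp only [neg_neg] at h
    convert h using 2
    rw [abs_neg]
    ring
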